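/- Fix real numbers M and a with 0 < |a| < M, set Δ(r) = r² − 2Mr + a², r₊ = M + √(M² − a²), r₋ = M − √(M² − a²), μ(r) = Δ(r)/(r² + a²), and let r*(r) = ∫_M^r (s² + a²)/Δ(s) ds for r ∈ (r₋, r₊). Let ρ : ℝ → (r₋, r₊) be the inverse of the strictly decreasing bijection r ↦ 2r*(r). Then ρ is differentiable with ρ'(x) = μ(ρ(x))/2 for all x ∈ ℝ, and for every x ∈ ℝ one has ∫_{−∞}^{x} (−μ(ρ(t))) dt = 2(r₊ − ρ(x)) and ∫_{x}^{+∞} (−μ(ρ(t))) dt = 2(ρ(x) − r₋). -/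

import Mathlib

open MeasureTheory

noncomputable def KerrDelta (M a r : ℝ) : ℝ := r ^ 2 - 2 * M * r + a ^ 2

noncomputable def rPlus (M a : ℝ) : ℝ := M + Real.sqrt (M ^ 2 - a ^ 2)

noncomputable def rMinus (M a : ℝ) : ℝ := M - Real.sqrt (M ^ 2 - a ^ 2)

noncomputable def kerrMu (M a r : ℝ) : ℝ := KerrDelta M a r / (r ^ 2 + a ^ 2)

/-- The tortoise coordinate `r*`, normalized by `r*(M) = 0`. -/
noncomputable def rStar (M a r : ℝ) : ℝ := ∫ s in M..r, (s ^ 2 + a ^ 2) / KerrDelta M a s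

/-- If `ρ : ℝ → (r₋, r₊)` is the inverse of the strictly decreasing bijection
`r ↦ 2r*(r)`, then `ρ' = μ∘ρ/2` and the improper integrals of `−μ∘ρ` over half-lines
are `2(r₊ − ρ(x))` and `2(ρ(x) − r₋)`. -/
theorem rho_deriv_and_integrals (M a : ℝ) (ha : 0 < |a|) (haM : |a| < M)
    (ρ : ℝ → ℝ) (hρmem : ∀ x : ℝ, ρ x ∈ Set.Ioo (rMinus M a) (rPlus M a))
    (hρinv : ∀ x : ℝ, 2 * rStar M a (ρ x) = x) :
    (∀ x : ℝ, HasDerivAt ρ (kerrMu M a (ρ x) / 2) x) ∧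
    (∀ x : ℝ, (∫ t in Set.Iic x, -kerrMu M a (ρ t)) = 2 * (rPlus M a - ρ x)) ∧
    (∀ x : ℝ, (∫ t in Set.Ici x, -kerrMu M a (ρ t)) = 2 * (ρ x - rMinus M a)) := by
  have ha0 : a ≠ 0 := abs_pos.mp ha
  have hM : 0 < M := lt_trans ha haM
  have hsq : (0:ℝ) < M ^ 2 - a ^ 2 := by nlinarith [abs_nonneg a, sq_abs a]
  set b := Real.sqrt (M ^ 2 - a ^ 2) with hbdef
  have hb : 0 < b := Real.sqrt_pos.mpr hsq
  have hb2 : b ^ 2 = M ^ 2 - a ^ 2 := Real.sq_sqrt hsq.le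
  set U : Set ℝ := Set.Ioo (rMinus M a) (rPlus M a) with hUdef
  have hUopen : IsOpen U := isOpen_Ioo
  have hrr : rMinus M a < rPlus M a := by
    simp only [rMinus, rPlus]; linarith
  have hΔfact : ∀ r : ℝ, KerrDelta M a r = (r - rMinus M a) * (r - rPlus M a) := by
    intro r
    simp only [KerrDelta, rMinus, rPlus, ← hbdef]
    linear_combination hb2
  have hΔneg : ∀ r ∈ U, KerrDelta M a r < 0 := by
    intro r hr
    rw [hΔfact]
    exact mul_neg_of_pos_of_neg (by linarith [hr.1]) (by linarith [hr.2])
  have hden : ∀ r : ℝ, 0 < r ^ 2 + a ^ 2 := by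
    intro r; nlinarith [sq_nonneg r, sq_abs a]
  set f : ℝ → ℝ := fun s => (s ^ 2 + a ^ 2) / KerrDelta M a s with hfdef
  have hKc : Continuous (KerrDelta M a) := by
    unfold KerrDelta; fun_prop
  have hfc : ∀ s ∈ U, ContinuousAt f s := by
    intro s hs
    exact ContinuousAt.div (by fun_prop) hKc.continuousAt (hΔneg s hs).ne
  have hfU : ContinuousOn f U := fun s hs => (hfc s hs).continuousWithinAt
  have hMU : M ∈ U := by
    constructor
    · simp only [rMinus, ← hbdef]; linarith
    · simp only [rPlus, ← hbdef]; linarith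
  have hfneg : ∀ s ∈ U, f s < 0 := fun s hs =>
    div_neg_of_pos_of_neg (hden s) (hΔneg s hs)
  -- FTC : derivative of rStar
  have hrStar : ∀ r ∈ U, HasDerivAt (rStar M a) (f r) r := by
    intro r hr
    have hsub : Set.uIcc M r ⊆ U := Set.ordConnected_Ioo.uIcc_subset hMU hr
    have hint : IntervalIntegrable f volume M r :=
      (hfU.mono hsub).intervalIntegrable
    have hmeas : StronglyMeasurableAtFilter f (nhds r) volume :=
      AEStronglyMeasurable.stronglyMeasurableAtFilter_of_mem
        (hfU.aestronglyMeasurable hUopen.measurableSet) (hUopen.mem_nhds hr)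
    exact intervalIntegral.integral_hasDerivAt_right hint hmeas (hfc r hr)
  set F : ℝ → ℝ := fun r => 2 * rStar M a r with hFdef
  have hF : ∀ r ∈ U, HasDerivAt F (2 * f r) r := fun r hr =>
    (hrStar r hr).const_mul 2
  have hFρ : ∀ x : ℝ, F (ρ x) = x := hρinv
  have hFanti : StrictAntiOn F U := by
    apply strictAntiOn_of_hasDerivWithinAt_neg (convex_Ioo _ _)
      (fun r hr => (hF r hr).continuousAt.continuousWithinAt)
      (fun r hr => ((hF r (by rwa [interior_Ioo] at hr)).hasDerivWithinAt))
    intro r hr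
    rw [interior_Ioo] at hr
    have := hfneg r hr
    linarith
  have hanti : StrictAnti ρ := by
    intro x y hxy
    rcases lt_trichotomy (ρ y) (ρ x) with h | h | h
    · exact h
    · exfalso
      have : x = y := by rw [← hρinv x, ← hρinv y, h]
      linarith
    · exfalso
      have := hFanti (hρmem x) (hρmem y) h
      rw [hFρ, hFρ] at this
      linarith
  have hsurj : ∀ r ∈ U, ρ (F r) = r := fun r hr =>
    hFanti.injOn (hρmem _) hr (hFρ (F r))
  -- continuity of ρ
  have hρcont : ∀ x : ℝ, ContinuousAt ρ x := by
    intro x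
    have hneg : StrictMono (fun x => -ρ x) := fun u v h => neg_lt_neg (hanti h)
    have himg : (fun x => -ρ x) '' Set.univ
        = Set.Ioo (-(rPlus M a)) (-(rMinus M a)) := by
      ext y
      simp only [Set.image_univ, Set.mem_range, Set.mem_Ioo]
      constructor
      · rintro ⟨t, rfl⟩
        exact ⟨neg_lt_neg (hρmem t).2, neg_lt_neg (hρmem t).1⟩
      · rintro ⟨h1, h2⟩
        have hyU : -y ∈ U := ⟨by linarith, by linarith⟩
        exact ⟨F (-y), by rw [hsurj _ hyU, neg_neg]⟩
    have hc : ContinuousAt (fun x => -ρ x) x := by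
      apply (hneg.strictMonoOn Set.univ).continuousAt_of_image_mem_nhds
        Filter.univ_mem
      rw [himg]
      exact isOpen_Ioo.mem_nhds ⟨neg_lt_neg (hρmem x).2, neg_lt_neg (hρmem x).1⟩
    have := hc.neg
    simpa only [Pi.neg_def, neg_neg] using this
  -- derivative of ρ
  have hρderiv : ∀ x : ℝ, HasDerivAt ρ (kerrMu M a (ρ x) / 2) x := by
    intro x
    have hne : 2 * f (ρ x) ≠ 0 := by
      have := hfneg (ρ x) (hρmem x); linarith
    have h := HasDerivAt.of_local_left_inverse (hρcont x)
      (hF (ρ x) (hρmem x)) hne (Filter.Eventually.of_forall hFρ)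
    have heq : (2 * f (ρ x))⁻¹ = kerrMu M a (ρ x) / 2 := by
      have hΔ := (hΔneg (ρ x) (hρmem x)).ne
      have hd := (hden (ρ x)).ne'
      simp only [hfdef, kerrMu]
      field_simp
    rwa [heq] at h
  -- limits of ρ at ∓∞
  have hμneg : ∀ t : ℝ, kerrMu M a (ρ t) ≤ 0 := fun t =>
    (div_neg_of_neg_of_pos (hΔneg (ρ t) (hρmem t)) (hden (ρ t))).le
  have hbot : Filter.Tendsto ρ Filter.atBot (nhds (rPlus M a)) := by
    rw [tendsto_order]
    constructor
    · intro c hc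
      obtain ⟨r, hr1, hr2⟩ := exists_between (max_lt hc hrr : max c (rMinus M a) < rPlus M a)
      have hrU : r ∈ U := ⟨lt_of_le_of_lt (le_max_right _ _) hr1, hr2⟩
      filter_upwards [Filter.Iio_mem_atBot (F r)] with t ht
      have : ρ (F r) < ρ t := hanti ht
      rw [hsurj r hrU] at this
      exact lt_trans (lt_of_le_of_lt (le_max_left _ _) hr1) this
    · intro c hc
      exact Filter.Eventually.of_forall fun t => lt_trans (hρmem t).2 hc
  have htop : Filter.Tendsto ρ Filter.atTop (nhds (rMinus M a)) := by
    rw [tendsto_order]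
    constructor
    · intro c hc
      exact Filter.Eventually.of_forall fun t => lt_trans hc (hρmem t).1
    · intro c hc
      obtain ⟨r, hr1, hr2⟩ := exists_between (lt_min hc hrr : rMinus M a < min c (rPlus M a))
      have hrU : r ∈ U := ⟨hr1, lt_of_lt_of_le hr2 (min_le_right _ _)⟩
      filter_upwards [Filter.Ioi_mem_atTop (F r)] with t ht
      have : ρ t < ρ (F r) := hanti ht
      rw [hsurj r hrU] at this
      exact lt_trans this (lt_of_lt_of_le hr2 (min_le_left _ _))
  refine ⟨hρderiv, ?_, ?_⟩
  -- integral over Iic x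
  · intro x
    set w : ℝ → ℝ := fun t => 2 * (rPlus M a - ρ (-t)) with hwdef
    have hwderiv : ∀ t ∈ Set.Ici (-x), HasDerivAt w (kerrMu M a (ρ (-t))) t := by
      intro t _
      have h1 : HasDerivAt (fun t : ℝ => ρ (-t)) (kerrMu M a (ρ (-t)) / 2 * (-1)) t :=
        (hρderiv (-t)).comp t (hasDerivAt_neg t)
      have h2 := ((h1.const_sub (rPlus M a)).const_mul 2)
      exact h2.congr_deriv (by ring)
    have hwneg : ∀ t ∈ Set.Ioi (-x), kerrMu M a (ρ (-t)) ≤ 0 := fun t _ => hμneg (-t)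
    have hwlim : Filter.Tendsto w Filter.atTop (nhds 0) := by
      have h1 : Filter.Tendsto (fun t : ℝ => ρ (-t)) Filter.atTop (nhds (rPlus M a)) :=
        hbot.comp Filter.tendsto_neg_atTop_atBot
      have h2 := ((h1.const_sub (rPlus M a)).const_mul 2)
      simpa using h2
    have key := integral_Ioi_of_hasDerivAt_of_nonpos' hwderiv hwneg hwlim
    have hc := integral_comp_neg_Iic x (fun t => -kerrMu M a (ρ (-t)))
    simp only [neg_neg] at hc
    rw [hc, integral_neg, key, hwdef]
    simp only [neg_neg]
    ring
  -- integral over Ici x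
  · intro x
    set w : ℝ → ℝ := fun t => 2 * (ρ t - rMinus M a) with hwdef
    have hwderiv : ∀ t ∈ Set.Ici x, HasDerivAt w (kerrMu M a (ρ t)) t := by
      intro t _
      have h2 := (((hρderiv t).sub_const (rMinus M a)).const_mul 2)
      exact h2.congr_deriv (by ring)
    have hwneg : ∀ t ∈ Set.Ioi x, kerrMu M a (ρ t) ≤ 0 := fun t _ => hμneg t
    have hwlim : Filter.Tendsto w Filter.atTop (nhds 0) := by
      have h2 := ((htop.sub_const (rMinus M a)).const_mul 2)
      simpa using h2
    have key := integral_Ioi_of_hasDerivAt_of_nonpos' hwderiv hwneg hwlim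
    rw [integral_Ici_eq_integral_Ioi, integral_neg, key, hwdef]
    ring
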